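/- Let Z : ℂ → ℂ satisfy the completed-zeta axioms with residue r. Then there exists L ∈ ℂ such that Z(s+1/2) + Z(s−1/2) tends to L as s → 1/2 along s ≠ 1/2; that is, the simple poles at s = 1/2 of the two summands cancel and the sum has a removable singularity there. -/

import Mathlib

open Filter Topology

theorem completed_zeta_sum_removable (Z : ℂ → ℂ) (r : ℝ)
    (hdiff : ∀ s : ℂ, s ≠ 0 → s ≠ 1 → DifferentiableAt ℂ Z s)
    (hfe : ∀ s : ℂ, Z (1 - s) = Z s)
    (hr : 0 < r)
    (hres : Tendsto (fun s : ℂ => (s - 1) * Z s) (𝓝[≠] 1) (𝓝 (r : ℂ))) :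
    ∃ L : ℂ, Tendsto (fun s : ℂ => Z (s + 1/2) + Z (s - 1/2)) (𝓝[≠] (1/2)) (𝓝 L) := by
  set f : ℂ → ℂ := fun s => Z (s + 1/2) + Z (s - 1/2) with hf
  -- map punctured neighborhoods
  have h1 : Tendsto (fun s : ℂ => s + 1/2) (𝓝[≠] (1/2 : ℂ)) (𝓝[≠] (1 : ℂ)) := by
    rw [tendsto_nhdsWithin_iff]
    constructor
    · have hcont : Continuous (fun s : ℂ => s + 1/2) := by continuity
      have := (hcont.tendsto (1/2 : ℂ)).mono_left (nhdsWithin_le_nhds (s := {(1/2 : ℂ)}ᶜ))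
      norm_num at this ⊢
      exact this
    · filter_upwards [self_mem_nhdsWithin] with s hs
      simp only [Set.mem_compl_iff, Set.mem_singleton_iff] at hs ⊢
      intro h; exact hs (by linear_combination h)
  have h2 : Tendsto (fun s : ℂ => 3/2 - s) (𝓝[≠] (1/2 : ℂ)) (𝓝[≠] (1 : ℂ)) := by
    rw [tendsto_nhdsWithin_iff]
    constructor
    · have hcont : Continuous (fun s : ℂ => 3/2 - s) := by continuity
      have := (hcont.tendsto (1/2 : ℂ)).mono_left (nhdsWithin_le_nhds (s := {(1/2 : ℂ)}ᶜ))
      norm_num at this ⊢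
      exact this
    · filter_upwards [self_mem_nhdsWithin] with s hs
      simp only [Set.mem_compl_iff, Set.mem_singleton_iff] at hs ⊢
      intro h; exact hs (by linear_combination -h)
  have hA := hres.comp h1
  have hB := hres.comp h2
  have hkey : Tendsto (fun s : ℂ => (s - 1/2) * f s) (𝓝[≠] (1/2 : ℂ)) (𝓝 0) := by
    have hsub := hA.sub hB
    rw [sub_self] at hsub
    refine hsub.congr (fun s => ?_)
    have hz : Z (s - 1/2) = Z (3/2 - s) := by
      have : (3/2 : ℂ) - s = 1 - (s - 1/2) := by ring
      rw [this, hfe]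
    simp only [Function.comp, hf, hz]
    ring
  -- eventual differentiability
  have hd : ∀ᶠ s in 𝓝[≠] (1/2 : ℂ), DifferentiableAt ℂ f s := by
    have hball : Metric.ball (1/2 : ℂ) (1/2) ∈ 𝓝 (1/2 : ℂ) :=
      Metric.ball_mem_nhds _ (by norm_num)
    filter_upwards [nhdsWithin_le_nhds hball, self_mem_nhdsWithin] with s hs hne
    simp only [Set.mem_compl_iff, Set.mem_singleton_iff] at hne
    have hdist : dist s (1/2 : ℂ) < 1/2 := Metric.mem_ball.mp hs
    have e1 : s + 1/2 ≠ 0 := by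
      intro h
      have : s = -(1/2 : ℂ) := by linear_combination h
      rw [this] at hdist
      simp [Complex.dist_eq] at hdist
      norm_num [Complex.norm_def, Complex.normSq] at hdist
    have e2 : s + 1/2 ≠ 1 := by
      intro h; exact hne (by linear_combination h)
    have e3 : s - 1/2 ≠ 0 := by
      intro h; exact hne (by linear_combination h)
    have e4 : s - 1/2 ≠ 1 := by
      intro h
      have : s = (3/2 : ℂ) := by linear_combination h
      rw [this] at hdist
      simp [Complex.dist_eq] at hdist
      norm_num [Complex.norm_def, Complex.normSq] at hdist
    have d1 : DifferentiableAt ℂ (fun s : ℂ => Z (s + 1/2)) s :=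
      (hdiff _ e1 e2).comp s (differentiableAt_id.add_const _)
    have d2 : DifferentiableAt ℂ (fun s : ℂ => Z (s - 1/2)) s :=
      (hdiff _ e3 e4).comp s (differentiableAt_id.sub_const _)
    exact d1.add d2
  -- little-o condition
  have ho : (fun z => f z - f (1/2)) =o[𝓝[≠] (1/2 : ℂ)] fun z => (z - 1/2)⁻¹ := by
    rw [Asymptotics.isLittleO_iff_tendsto']
    · have hc : Tendsto (fun s : ℂ => (s - 1/2) * f (1/2)) (𝓝[≠] (1/2 : ℂ)) (𝓝 0) := by
        have : Tendsto (fun s : ℂ => (s - 1/2) * f (1/2)) (𝓝 (1/2 : ℂ)) (𝓝 0) := by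
          have hcont : Continuous (fun s : ℂ => (s - 1/2) * f (1/2)) := by continuity
          have := hcont.tendsto (1/2 : ℂ)
          simpa using this
        exact this.mono_left nhdsWithin_le_nhds
      have := hkey.sub hc
      rw [sub_zero] at this
      refine this.congr (fun s => ?_)
      rw [div_inv_eq_mul]
      ring
    · filter_upwards [self_mem_nhdsWithin] with s hs
      simp only [Set.mem_compl_iff, Set.mem_singleton_iff] at hs
      intro h
      exact absurd (inv_eq_zero.mp h) (sub_ne_zero.mpr hs)
  exact ⟨_, Complex.tendsto_limUnder_of_differentiable_on_punctured_nhds_of_isLittleO hd ho⟩
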